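/- Let p be a prime, let d ≥ 1 be an integer, and let f ∈ ℤ_p[T_1, …, T_d] be a nonzero polynomial. Then the zero set {α ∈ ℤ_p^d : f(α) = 0} is a closed subset of ℤ_p^d of Haar measure zero. -/

import Mathlib

open MeasureTheory

section Aux

variable (p : ℕ) [Fact p.Prime]

lemma padicInt_nhdsWithin_ne_neBot : (nhdsWithin (0 : PadicInt p) {(0 : PadicInt p)}ᶜ).NeBot := by
  rw [← mem_closure_iff_nhdsWithin_neBot]
  have hp1 : (1 : ℕ) < p := (Fact.out : p.Prime).one_lt
  refine mem_closure_of_tendsto (f := fun n : ℕ => ((p : PadicInt p)) ^ n)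
    (b := Filter.atTop) ?_ ?_
  · apply tendsto_pow_atTop_nhds_zero_of_norm_lt_one
    rw [PadicInt.norm_p]
    rw [inv_lt_one_iff₀]
    right
    exact_mod_cast hp1
  · filter_upwards with n
    have hpne : ((p : PadicInt p)) ≠ 0 := by
      exact_mod_cast (Nat.cast_ne_zero (R := PadicInt p)).mpr (Fact.out : p.Prime).ne_zero
    simp only [Set.mem_compl_iff, Set.mem_singleton_iff]
    exact pow_ne_zero n hpne

/-- Key induction: with respect to a product of Haar measures on `ℤ_p`, the zero set of a
nonzero multivariate polynomial is null. -/
lemma padic_pi_polynomial_null [MeasurableSpace (PadicInt p)] [BorelSpace (PadicInt p)]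
    (ν : Measure (PadicInt p)) [ν.IsAddHaarMeasure] :
    ∀ (n : ℕ) (f : MvPolynomial (Fin n) (PadicInt p)), f ≠ 0 →
      Measure.pi (fun _ : Fin n => ν) {α | MvPolynomial.eval α f = 0} = 0 := by
  haveI : (nhdsWithin (0 : PadicInt p) {(0 : PadicInt p)}ᶜ).NeBot :=
    padicInt_nhdsWithin_ne_neBot p
  haveI : NoAtoms ν := Measure.IsAddHaarMeasure.nullSingletonClass ν
  haveI : IsFiniteMeasure ν := CompactSpace.isFiniteMeasure
  intro n
  induction n with
  | zero =>
    intro f hf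
    obtain ⟨r, rfl⟩ := MvPolynomial.C_surjective (Fin 0) f
    have hr : r ≠ 0 := fun h => hf (by rw [h, map_zero])
    have : {α : Fin 0 → PadicInt p | MvPolynomial.eval α (MvPolynomial.C r) = 0} = ∅ := by
      ext α
      simp [hr]
    rw [this]
    simp
  | succ n ih =>
    intro f hf
    set S : Set (Fin (n + 1) → PadicInt p) := {α | MvPolynomial.eval α f = 0} with hSdef
    have hScont : Continuous fun α : Fin (n + 1) → PadicInt p => MvPolynomial.eval α f :=
      MvPolynomial.continuous_eval f
    have hSmeas : MeasurableSet S :=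
      (isClosed_singleton.preimage hScont).measurableSet
    -- the polynomial in the first variable
    set F : Polynomial (MvPolynomial (Fin n) (PadicInt p)) :=
      MvPolynomial.finSuccEquiv (PadicInt p) n f with hFdef
    have hF : F ≠ 0 := by
      intro h
      apply hf
      have := (MvPolynomial.finSuccEquiv (PadicInt p) n).injective
        (a₁ := f) (a₂ := 0) (by simpa [hFdef] using h)
      simpa using this
    obtain ⟨k, hk⟩ : ∃ k, F.coeff k ≠ 0 := by
      by_contra h
      push_neg at h
      exact hF (Polynomial.ext fun k => by simp [h k])
    -- transfer to the product measure on ℤ_p × (Fin n → ℤ_p), then swap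
    have e1 := (measurePreserving_piFinSuccAbove (fun _ : Fin (n + 1) => ν) 0).symm
    rw [← e1.measure_preimage hSmeas.nullMeasurableSet]
    set T : Set (PadicInt p × (Fin n → PadicInt p)) :=
      (MeasurableEquiv.piFinSuccAbove (fun _ : Fin (n + 1) => PadicInt p) 0).symm ⁻¹' S with hTdef
    have hTmeas : MeasurableSet T :=
      hSmeas.preimage (MeasurableEquiv.piFinSuccAbove _ 0).symm.measurable
    have e2 := (Measure.measurePreserving_swap
      (μ := Measure.pi fun _ : Fin n => ν) (ν := ν))
    rw [← e2.measure_preimage hTmeas.nullMeasurableSet]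
    have hT'meas : MeasurableSet (Prod.swap ⁻¹' T) := hTmeas.preimage measurable_swap
    rw [Measure.measure_prod_null hT'meas]
    -- a.e. over the remaining variables, the slice is null
    have hih := ih (F.coeff k) hk
    have hae : ∀ᵐ s ∂(Measure.pi fun _ : Fin n => ν),
        MvPolynomial.eval s (F.coeff k) ≠ 0 := by
      refine ae_iff.mpr ?_
      simpa using hih
    filter_upwards [hae] with s hs
    -- identify the slice
    have hslice : Prod.mk s ⁻¹' (Prod.swap ⁻¹' T) =
        {y : PadicInt p | MvPolynomial.eval (Fin.cons y s) f = 0} := by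
      ext y
      simp only [Set.mem_preimage, Prod.swap_prod_mk, hTdef, hSdef, Set.mem_setOf_eq,
        MeasurableEquiv.piFinSuccAbove_symm_apply, Fin.insertNthEquiv_zero, Fin.consEquiv_apply]
      exact Iff.rfl

    have hg : Polynomial.map (MvPolynomial.eval s) F ≠ 0 := by
      intro h
      apply hs
      have := congrArg (fun q => Polynomial.coeff q k) h
      simpa [Polynomial.coeff_map] using this
    have hroots : {y : PadicInt p | MvPolynomial.eval (Fin.cons y s) f = 0} =
        {y | Polynomial.IsRoot (Polynomial.map (MvPolynomial.eval s) F) y} := by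
      ext y
      simp [MvPolynomial.eval_eq_eval_mv_eval', Polynomial.IsRoot, hFdef]
    have : ν (Prod.mk s ⁻¹' (Prod.swap ⁻¹' T)) = 0 := by
      rw [hslice, hroots]
      exact (Polynomial.finite_setOf_isRoot hg).measure_zero ν
    simpa using this

end Aux

/-- Let `p` be a prime, `d ≥ 1` and `f ∈ ℤ_p[T_1, …, T_d]` a nonzero
polynomial. Then the zero set `{α ∈ ℤ_p^d : f(α) = 0}` is closed and has Haar measure
zero (for any (additive) Haar measure on `ℤ_p^d`, in particular for the normalized one). -/
theorem zero_set_of_polynomial_closed_and_null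
    (p : ℕ) [Fact p.Prime] (d : ℕ) (hd : 1 ≤ d)
    (f : MvPolynomial (Fin d) (PadicInt p)) (hf : f ≠ 0)
    [MeasurableSpace (Fin d → PadicInt p)] [BorelSpace (Fin d → PadicInt p)]
    (μ : Measure (Fin d → PadicInt p)) [μ.IsAddHaarMeasure] :
    IsClosed {α : Fin d → PadicInt p | MvPolynomial.eval α f = 0} ∧
      μ {α : Fin d → PadicInt p | MvPolynomial.eval α f = 0} = 0 := by
  have hcont : Continuous fun α : Fin d → PadicInt p => MvPolynomial.eval α f :=
    MvPolynomial.continuous_eval f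
  refine ⟨isClosed_singleton.preimage hcont, ?_⟩
  letI mZ : MeasurableSpace (PadicInt p) := borel _
  haveI : BorelSpace (PadicInt p) := ⟨rfl⟩
  -- identify the ambient measurable space with the product σ-algebra
  have h : ‹MeasurableSpace (Fin d → PadicInt p)› =
      (MeasurableSpace.pi : MeasurableSpace (Fin d → PadicInt p)) := by
    rw [‹BorelSpace (Fin d → PadicInt p)›.measurable_eq,
      (inferInstance : @BorelSpace (Fin d → PadicInt p) Pi.topologicalSpace MeasurableSpace.pi).measurable_eq]
  subst h
  -- a concrete Haar measure on ℤ_p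
  let K : TopologicalSpace.PositiveCompacts (PadicInt p) :=
    ⟨⟨Set.univ, isCompact_univ⟩, by simp⟩
  let ν : Measure (PadicInt p) := Measure.addHaarMeasure K
  haveI : IsFiniteMeasure ν := CompactSpace.isFiniteMeasure
  have hnull : Measure.pi (fun _ : Fin d => ν)
      {α : Fin d → PadicInt p | MvPolynomial.eval α f = 0} = 0 :=
    padic_pi_polynomial_null p ν d f hf
  haveI : IsFiniteMeasure μ := CompactSpace.isFiniteMeasure
  have habs : μ ≪ Measure.pi (fun _ : Fin d => ν) :=
    Measure.absolutelyContinuous_isAddHaarMeasure μ (Measure.pi fun _ : Fin d => ν)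
  exact habs hnull
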